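/- Let A and B be bounded self-adjoint operators on a complex Hilbert space with B nonnegative and B ≠ 0. Then ⋃_{t∈ℝ} spec(A + tB) is dense in ℝ (where spectra are regarded as subsets of ℝ). -/

import Mathlib

set_option maxHeartbeats 1000000

noncomputable section

namespace Stmt12Aux

variable {H : Type*} [NormedAddCommGroup H] [InnerProductSpace ℂ H] [CompleteSpace H]

local notation "⟪" x ", " y "⟫" => @inner ℂ _ _ x y
local notation "reC" => RCLike.re (K := ℂ)

lemma reC_ofReal_mul (c : ℝ) (z : ℂ) : reC ((c : ℂ) * z) = c * reC z :=
  Complex.re_ofReal_mul c z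

lemma symm_apply {R : H →L[ℂ] H} (hR : IsSelfAdjoint R) (u v : H) :
    ⟪R u, v⟫ = ⟪u, R v⟫ := hR.isSymmetric u v

/-- For a positive operator `B`, `‖B v‖ ^ 2 ≤ ‖B‖ * re ⟪B v, v⟫`. -/
lemma key_ineq {B : H →L[ℂ] H} (hB : B.IsPositive) (v : H) :
    ‖B v‖ ^ 2 ≤ ‖B‖ * reC ⟪B v, v⟫ := by
  set p : ℝ := reC ⟪B v, v⟫ with hp
  set q : ℝ := ‖B v‖ ^ 2 with hq
  set r : ℝ := reC ⟪B (B v), B v⟫ with hr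
  have hp0 : 0 ≤ p := hB.re_inner_nonneg_left v
  have hr0 : 0 ≤ r := hB.re_inner_nonneg_left (B v)
  have hBvq : reC ⟪B v, B v⟫ = q := inner_self_eq_norm_sq (B v)
  have hsymq : reC ⟪B (B v), v⟫ = q := by
    rw [symm_apply hB.isSelfAdjoint (B v) v]; exact hBvq
  have hrq : r ≤ ‖B‖ * q := by
    have h1 : r ≤ ‖⟪B (B v), B v⟫‖ := by
      refine le_trans (le_abs_self _) (RCLike.abs_re_le_norm _)
    have h2 : ‖⟪B (B v), B v⟫‖ ≤ ‖B (B v)‖ * ‖B v‖ := norm_inner_le_norm _ _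
    have h3 : ‖B (B v)‖ ≤ ‖B‖ * ‖B v‖ := B.le_opNorm (B v)
    have h4 : ‖B (B v)‖ * ‖B v‖ ≤ (‖B‖ * ‖B v‖) * ‖B v‖ :=
      mul_le_mul_of_nonneg_right h3 (norm_nonneg _)
    have h5 : ‖B‖ * ‖B v‖ * ‖B v‖ = ‖B‖ * q := by rw [hq]; ring
    linarith
  have hquad : ∀ c : ℝ, 0 ≤ r * (c * c) + (-(2 * q)) * c + p := by
    intro c
    have h0 : 0 ≤ reC ⟪B (v - (c : ℂ) • B v), v - (c : ℂ) • B v⟫ :=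
      hB.re_inner_nonneg_left _
    have hexp : B (v - (c : ℂ) • B v) = B v - (c : ℂ) • B (B v) := by
      rw [map_sub, map_smul]
    rw [hexp] at h0
    simp only [inner_sub_left, inner_sub_right, inner_smul_left, inner_smul_right,
      Complex.conj_ofReal, mul_sub, map_sub, map_add, reC_ofReal_mul] at h0
    rw [hsymq, hBvq] at h0
    nlinarith [h0]
  have hdisc := discrim_le_zero hquad
  rw [discrim] at hdisc
  -- hdisc : (-(2*q))^2 - 4 * r * p ≤ 0, i.e. 4 q^2 ≤ 4 r p
  have hq2 : q ^ 2 ≤ r * p := by nlinarith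
  have hq0 : 0 ≤ q := sq_nonneg _
  rcases eq_or_lt_of_le hq0 with h | h
  · rw [← h]; positivity
  · -- q > 0 : from q^2 ≤ r p ≤ ‖B‖ q p
    have : q ^ 2 ≤ (‖B‖ * q) * p := le_trans hq2 (mul_le_mul_of_nonneg_right hrq hp0)
    nlinarith

/-- Resolvent-type identity for an abstract family of inverses. -/
lemma resolvent_id {B : H →L[ℂ] H} {T R : ℝ → (H →L[ℂ] H)}
    (hT : ∀ s t : ℝ, T s - T t = (((s - t : ℝ)) : ℂ) • B)
    (hR1 : ∀ t, T t * R t = 1) (hR2 : ∀ t, R t * T t = 1) (s t : ℝ) :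
    R s = R t + (((t - s : ℝ)) : ℂ) • (R s * B * R t) := by
  have hTt : T t = T s + (((t - s : ℝ)) : ℂ) • B := by
    have := hT t s
    rw [sub_eq_iff_eq_add] at this
    rw [this, add_comm]
  calc R s = R s * (T t * R t) := by rw [hR1 t, mul_one]
    _ = R s * ((T s + (((t - s : ℝ)) : ℂ) • B) * R t) := by rw [← hTt]
    _ = R s * (T s * R t) + (((t - s : ℝ)) : ℂ) • (R s * (B * R t)) := by
        rw [add_mul, smul_mul_assoc, mul_add, mul_smul_comm]
    _ = R t + (((t - s : ℝ)) : ℂ) • (R s * B * R t) := by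
        rw [← mul_assoc, hR2 s, one_mul, mul_assoc]

/-- Core analytic lemma: if the resolvent family exists globally with a uniform bound,
then the quadratic form of the resolvent against `B`-vectors is nonpositive. -/
lemma gap_aux {B : H →L[ℂ] H} (hB : B.IsPositive) {eps : ℝ} (heps : 0 < eps)
    {T R : ℝ → (H →L[ℂ] H)}
    (hT : ∀ s t : ℝ, T s - T t = (((s - t : ℝ)) : ℂ) • B)
    (hR1 : ∀ t, T t * R t = 1) (hR2 : ∀ t, R t * T t = 1)
    (hRsa : ∀ t, IsSelfAdjoint (R t))
    (hRn : ∀ t, ‖R t‖ ≤ eps⁻¹) :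
    ∀ (t₀ : ℝ) (x : H), reC ⟪R t₀ (B x), B x⟫ ≤ 0 := by
  intro t₀ x
  by_contra hpos
  push_neg at hpos
  set y : H := B x with hy
  set ψ : ℝ → ℝ := fun t => reC ⟪R t y, y⟫ with hψdef
  set D : ℝ → ℝ := fun t => reC ⟪B (R t y), R t y⟫ with hDdef
  set Ef : ℝ → ℝ → ℝ := fun s t => reC ⟪R s (B (R t (B (R t y)))), y⟫ with hEdef
  have ha : 0 < ψ t₀ := hpos
  set a : ℝ := ψ t₀ with hadef
  -- pointwise expansion
  have happly : ∀ (s t : ℝ) (w : H),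
      R s w = R t w + (((t - s : ℝ)) : ℂ) • (R s (B (R t w))) := by
    intro s t w
    conv_lhs => rw [resolvent_id hT hR1 hR2 s t]
    simp [ContinuousLinearMap.add_apply, ContinuousLinearMap.smul_apply,
      ContinuousLinearMap.mul_apply]
  have hre : ∀ (s t : ℝ) (u : H), reC ⟪R s u, y⟫
      = reC ⟪R t u, y⟫ + (t - s) * reC ⟪R s (B (R t u)), y⟫ := by
    intro s t u
    rw [happly s t u, inner_add_left, inner_smul_left, Complex.conj_ofReal, map_add,
      reC_ofReal_mul]
  have hψexp : ∀ s t : ℝ, ψ s = ψ t + (t - s) * D t + (t - s) ^ 2 * Ef s t := by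
    intro s t
    have h1 := hre s t y
    have h2 := hre s t (B (R t y))
    simp only [hψdef, hDdef, hEdef]
    rw [hre s t y, hre s t (B (R t y)), symm_apply (hRsa t) (B (R t y)) y]
    ring
  clear happly hre
  -- bounds
  have hcinv : (0:ℝ) ≤ eps⁻¹ := by positivity
  have hv : ∀ t : ℝ, ‖R t y‖ ≤ eps⁻¹ * ‖y‖ := fun t =>
    le_trans ((R t).le_opNorm y) (mul_le_mul_of_nonneg_right (hRn t) (norm_nonneg y))
  set K : ℝ := eps⁻¹ * (‖B‖ * (eps⁻¹ * (‖B‖ * (eps⁻¹ * ‖y‖)))) * ‖y‖ with hKdef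
  have hK0 : 0 ≤ K := by positivity
  have hEb : ∀ s t : ℝ, |Ef s t| ≤ K := by
    intro s t
    have h1 : |Ef s t| ≤ ‖R s (B (R t (B (R t y))))‖ * ‖y‖ := by
      refine le_trans (RCLike.abs_re_le_norm _) ?_
      exact norm_inner_le_norm _ _
    refine h1.trans ?_
    have s2 : ‖B (R t y)‖ ≤ ‖B‖ * (eps⁻¹ * ‖y‖) :=
      (B.le_opNorm _).trans (mul_le_mul_of_nonneg_left (hv t) (norm_nonneg _))
    have s3 : ‖R t (B (R t y))‖ ≤ eps⁻¹ * (‖B‖ * (eps⁻¹ * ‖y‖)) :=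
      ((R t).le_opNorm _).trans (mul_le_mul (hRn t) s2 (norm_nonneg _) hcinv)
    have s4 : ‖B (R t (B (R t y)))‖ ≤ ‖B‖ * (eps⁻¹ * (‖B‖ * (eps⁻¹ * ‖y‖))) :=
      (B.le_opNorm _).trans (mul_le_mul_of_nonneg_left s3 (norm_nonneg _))
    have s5 : ‖R s (B (R t (B (R t y))))‖ ≤ eps⁻¹ * (‖B‖ * (eps⁻¹ * (‖B‖ * (eps⁻¹ * ‖y‖)))) :=
      ((R s).le_opNorm _).trans (mul_le_mul (hRn s) s4 (norm_nonneg _) hcinv)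
    exact mul_le_mul_of_nonneg_right s5 (norm_nonneg y)
  set Mb : ℝ := eps⁻¹ * ‖y‖ * ‖y‖ with hMbdef
  have hψb : ∀ t : ℝ, ψ t ≤ Mb := by
    intro t
    have h1 : ψ t ≤ ‖(⟪R t y, y⟫ : ℂ)‖ := by
      refine le_trans (le_abs_self _) (RCLike.abs_re_le_norm _)
    refine h1.trans ?_
    refine (norm_inner_le_norm _ _).trans ?_
    exact mul_le_mul_of_nonneg_right (hv t) (norm_nonneg y)
  set M : ℝ := ‖B‖ * ‖x‖ ^ 2 + 1 with hMdef
  have hM0 : (0:ℝ) < M := by positivity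
  have hD0 : ∀ t : ℝ, 0 ≤ D t := fun t => hB.re_inner_nonneg_left (R t y)
  have hDb : ∀ t : ℝ, ψ t ^ 2 ≤ M * D t := by
    intro t
    have e1 : ψ t = reC ⟪B (R t y), x⟫ := by
      simp only [hψdef, hy]
      rw [symm_apply hB.isSelfAdjoint (R t y) x]
    have e2 : |ψ t| ≤ ‖B (R t y)‖ * ‖x‖ := by
      rw [e1]
      exact le_trans (RCLike.abs_re_le_norm _) (norm_inner_le_norm _ _)
    have e3 : ψ t ^ 2 ≤ (‖B (R t y)‖ * ‖x‖) ^ 2 := by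
      rw [← sq_abs]
      exact pow_le_pow_left₀ (abs_nonneg _) e2 2
    have e4 : ‖B (R t y)‖ ^ 2 ≤ ‖B‖ * D t := key_ineq hB (R t y)
    have e5 : ‖B (R t y)‖ ^ 2 * ‖x‖ ^ 2 ≤ (‖B‖ * D t) * ‖x‖ ^ 2 :=
      mul_le_mul_of_nonneg_right e4 (sq_nonneg _)
    nlinarith [hD0 t, sq_nonneg (‖x‖), norm_nonneg B]
  -- Riccati blow-up by induction
  set h : ℝ := a ^ 2 / (2 * M * (K + 1)) with hhdef
  have hh0 : 0 < h := div_pos (pow_pos ha 2) (by positivity)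
  set δ : ℝ := h ^ 2 * (K + 1) with hδdef
  have hδ0 : 0 < δ := by positivity
  have hahM : a ^ 2 = 2 * M * (K + 1) * h := by
    rw [hhdef]; field_simp
  have hstep : ∀ t : ℝ, a ≤ ψ t → ψ t + δ ≤ ψ (t - h) := by
    intro t hat
    have hexp := hψexp (t - h) t
    have e : t - (t - h) = h := by ring
    rw [e] at hexp
    have hD : a ^ 2 ≤ M * D t := le_trans (pow_le_pow_left₀ ha.le hat 2) (hDb t)
    have hDt : 2 * (K + 1) * h ≤ D t := by
      rw [hahM] at hD
      have := (mul_le_mul_iff_right₀ hM0).mp (by linarith [hD] : M * (2 * (K + 1) * h) ≤ M * D t)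
      linarith [this]
    have hE : -K ≤ Ef (t - h) t := (abs_le.1 (hEb (t - h) t)).1
    have hE2 : h ^ 2 * (-K) ≤ h ^ 2 * Ef (t - h) t :=
      mul_le_mul_of_nonneg_left hE (sq_nonneg h)
    have hDt2 : h * (2 * (K + 1) * h) ≤ h * D t :=
      mul_le_mul_of_nonneg_left hDt hh0.le
    rw [hexp]
    nlinarith [hE2, hDt2]
  have hiter : ∀ n : ℕ, a + n * δ ≤ ψ (t₀ - n * h) := by
    intro n
    induction n with
    | zero => simp [hadef]
    | succ n ih =>
      have h1 : a ≤ ψ (t₀ - n * h) := by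
        have : (0:ℝ) ≤ (n:ℝ) * δ := by positivity
        linarith
      have h2 := hstep (t₀ - n * h) h1
      have e : t₀ - ((n:ℝ) + 1) * h = (t₀ - n * h) - h := by ring
      push_cast
      rw [e]
      linarith
  obtain ⟨n, hn⟩ := exists_nat_gt ((Mb - a) / δ)
  have h1 := hiter n
  have h2 := hψb (t₀ - n * h)
  have h3 : Mb - a < n * δ := by
    rw [div_lt_iff₀ hδ0] at hn
    linarith
  linarith

lemma exists_resolvent {A B : H →L[ℂ] H} (hA : IsSelfAdjoint A) (hB : B.IsPositive)
    {lam eps : ℝ} (heps : 0 < eps)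
    (hgap : ∀ (t : ℝ) (z : ℂ), z ∈ spectrum ℂ (A + (t : ℂ) • B) → eps ≤ ‖z - (lam : ℂ)‖) :
    ∃ R : ℝ → (H →L[ℂ] H),
      (∀ t : ℝ, (A + (t : ℂ) • B - algebraMap ℝ (H →L[ℂ] H) lam) * R t = 1) ∧
      (∀ t : ℝ, R t * (A + (t : ℂ) • B - algebraMap ℝ (H →L[ℂ] H) lam) = 1) ∧
      (∀ t : ℝ, IsSelfAdjoint (R t)) ∧ (∀ t : ℝ, ‖R t‖ ≤ eps⁻¹) := by
  have hsa : ∀ t : ℝ, IsSelfAdjoint (A + (t : ℂ) • B) := by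
    intro t
    have h1 : IsSelfAdjoint ((t : ℂ) • B) := by
      rw [IsSelfAdjoint, star_smul, Complex.star_def, Complex.conj_ofReal,
        hB.isSelfAdjoint.star_eq]
    exact hA.add h1
  have hspec : ∀ (t : ℝ) (μ : ℝ), μ ∈ spectrum ℝ (A + (t : ℂ) • B) → eps ≤ |μ - lam| := by
    intro t μ hμ
    have h1 : ((μ : ℝ) : ℂ) ∈ spectrum ℂ (A + (t : ℂ) • B) := by
      have := spectrum.algebraMap_mem ℂ hμ
      simpa using this
    have h2 := hgap t _ h1
    rwa [← Complex.ofReal_sub, Complex.norm_real, Real.norm_eq_abs] at h2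
  have hne : ∀ (t : ℝ) (μ : ℝ), μ ∈ spectrum ℝ (A + (t : ℂ) • B) → μ - lam ≠ 0 := by
    intro t μ hμ h0
    have := hspec t μ hμ
    rw [h0] at this
    simp only [abs_zero] at this
    linarith
  set f : ℝ → ℝ := fun μ => (μ - lam)⁻¹ with hfdef
  have hf : ∀ t : ℝ, ContinuousOn f (spectrum ℝ (A + (t : ℂ) • B)) := by
    intro t μ hμ
    exact (((continuousAt_id.sub continuousAt_const).inv₀ (hne t μ hμ))).continuousWithinAt
  have hg : ∀ t : ℝ, ContinuousOn (fun μ : ℝ => μ - lam) (spectrum ℝ (A + (t : ℂ) • B)) := by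
    intro t
    exact (continuous_id.sub continuous_const).continuousOn
  have hgc : ∀ t : ℝ, cfc (fun μ : ℝ => μ - lam) (A + (t : ℂ) • B)
      = A + (t : ℂ) • B - algebraMap ℝ (H →L[ℂ] H) lam := by
    intro t
    rw [cfc_sub (fun μ : ℝ => μ) (fun _ : ℝ => lam) (A + (t : ℂ) • B) (by fun_prop) (by fun_prop)]
    rw [cfc_id' ℝ (A + (t : ℂ) • B) (hsa t), cfc_const lam (A + (t : ℂ) • B) (hsa t)]
  refine ⟨fun t => cfc f (A + (t : ℂ) • B), ?_, ?_, ?_, ?_⟩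
  · intro t
    rw [← hgc t, ← cfc_mul (fun μ : ℝ => μ - lam) f (A + (t : ℂ) • B) (hg t) (hf t)]
    have : (spectrum ℝ (A + (t : ℂ) • B)).EqOn (fun μ => (μ - lam) * f μ) (fun _ => (1 : ℝ)) :=
      fun μ hμ => mul_inv_cancel₀ (hne t μ hμ)
    rw [cfc_congr this, cfc_const 1 (A + (t : ℂ) • B) (hsa t), map_one]
  · intro t
    rw [← hgc t, ← cfc_mul f (fun μ : ℝ => μ - lam) (A + (t : ℂ) • B) (hf t) (hg t)]
    have : (spectrum ℝ (A + (t : ℂ) • B)).EqOn (fun μ => f μ * (μ - lam)) (fun _ => (1 : ℝ)) :=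
      fun μ hμ => inv_mul_cancel₀ (hne t μ hμ)
    rw [cfc_congr this, cfc_const 1 (A + (t : ℂ) • B) (hsa t), map_one]
  · intro t
    exact cfc_predicate _ _
  · intro t
    refine norm_cfc_le (by positivity) ?_
    intro μ hμ
    have h1 := hspec t μ hμ
    rw [hfdef]
    simp only [Real.norm_eq_abs, abs_inv]
    exact inv_anti₀ heps h1

end Stmt12Aux

open Stmt12Aux in
/-- Let `A`, `B` be bounded self-adjoint operators on a complex Hilbert space with `B`
nonnegative and `B ≠ 0`. Then the union over all real `t` of the (real) spectra of
`A + t B` is dense in `ℝ`. -/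
theorem stmt12 {H : Type*} [NormedAddCommGroup H] [InnerProductSpace ℂ H] [CompleteSpace H]
    (A B : H →L[ℂ] H) (hA : IsSelfAdjoint A) (hB : B.IsPositive) (hB0 : B ≠ 0) :
    Dense (⋃ t : ℝ, {l : ℝ | (l : ℂ) ∈ spectrum ℂ (A + (t : ℂ) • B)}) := by
  classical
  by_contra hd
  rw [Metric.dense_iff] at hd
  push_neg at hd
  obtain ⟨lam, eps, heps, hball⟩ := hd
  have hsa : ∀ t : ℝ, IsSelfAdjoint (A + (t : ℂ) • B) := by
    intro t
    have h1 : IsSelfAdjoint ((t : ℂ) • B) := by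
      rw [IsSelfAdjoint, star_smul, Complex.star_def, Complex.conj_ofReal,
        hB.isSelfAdjoint.star_eq]
    exact hA.add h1
  have hgap : ∀ (t : ℝ) (z : ℂ), z ∈ spectrum ℂ (A + (t : ℂ) • B) → eps ≤ ‖z - (lam : ℂ)‖ := by
    intro t z hz
    by_contra hlt
    push_neg at hlt
    have hz' : z = ((z.re : ℝ) : ℂ) := (hsa t).mem_spectrum_eq_re hz
    have hmem : z.re ∈ Metric.ball lam eps := by
      rw [Metric.mem_ball, Real.dist_eq]
      rw [hz', ← Complex.ofReal_sub, Complex.norm_real, Real.norm_eq_abs] at hlt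
      exact hlt
    have hunion : z.re ∈ ⋃ t : ℝ, {l : ℝ | (l : ℂ) ∈ spectrum ℂ (A + (t : ℂ) • B)} := by
      refine Set.mem_iUnion.mpr ⟨t, ?_⟩
      show ((z.re : ℝ) : ℂ) ∈ spectrum ℂ (A + (t : ℂ) • B)
      rw [← hz']
      exact hz
    rw [Set.eq_empty_iff_forall_notMem] at hball
    exact hball z.re ⟨hmem, hunion⟩
  obtain ⟨R, hR1, hR2, hRsa, hRn⟩ := exists_resolvent hA hB heps hgap
  set T : ℝ → (H →L[ℂ] H) := fun t => A + (t : ℂ) • B - algebraMap ℝ (H →L[ℂ] H) lam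
    with hTdef
  have hT : ∀ s t : ℝ, T s - T t = (((s - t : ℝ)) : ℂ) • B := by
    intro s t
    simp only [hTdef]
    rw [Complex.ofReal_sub, sub_smul]
    abel
  have hle1 := gap_aux hB heps hT hR1 hR2 hRsa hRn
  have hle2 := gap_aux hB heps (T := fun t => -(T (-t))) (R := fun t => -(R (-t)))
    (by
      intro s t
      have h := hT (-t) (-s)
      rw [show (-t - -s : ℝ) = s - t by ring] at h
      rw [← h]
      abel)
    (fun t => by rw [neg_mul_neg]; exact hR1 (-t))
    (fun t => by rw [neg_mul_neg]; exact hR2 (-t))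
    (fun t => (hRsa (-t)).neg)
    (fun t => by rw [norm_neg]; exact hRn (-t))
  have hre0 : ∀ (t : ℝ) (x : H), RCLike.re (inner ℂ (R t (B x)) (B x) : ℂ) = 0 := by
    intro t x
    have h1 := hle1 t x
    have h2 := hle2 (-t) x
    simp only [neg_neg] at h2
    rw [ContinuousLinearMap.neg_apply, inner_neg_left, map_neg] at h2
    linarith
  have hzero : ∀ t : ℝ, B * R t * B = 0 := by
    intro t
    have hform : ∀ x : H, (inner ℂ ((B * R t * B) x) x : ℂ) = 0 := by
      intro x
      have happ : (B * R t * B) x = B (R t (B x)) := rfl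
      rw [happ]
      have hmove : (inner ℂ (B (R t (B x))) x : ℂ) = (inner ℂ (R t (B x)) (B x) : ℂ) :=
        symm_apply hB.isSelfAdjoint (R t (B x)) x
      rw [hmove]
      set z : ℂ := (inner ℂ (R t (B x)) (B x) : ℂ) with hzdef
      have hconj : (starRingEnd ℂ) z = z := by
        rw [hzdef]
        calc (starRingEnd ℂ) (inner ℂ (R t (B x)) (B x) : ℂ)
            = (inner ℂ (B x) (R t (B x)) : ℂ) := inner_conj_symm _ _
          _ = (inner ℂ (R t (B x)) (B x) : ℂ) := (symm_apply (hRsa t) (B x) (B x)).symm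
      have him : z.im = 0 := Complex.conj_eq_iff_im.mp hconj
      have hre : z.re = 0 := by
        have := hre0 t x
        simpa [RCLike.re_to_complex] using this
      exact Complex.ext hre him
    have hlin := (inner_map_self_eq_zero ((B * R t * B : H →L[ℂ] H) : H →ₗ[ℂ] H)).mp
      (fun x => hform x)
    apply ContinuousLinearMap.coe_injective
    rw [hlin]
    rfl
  have hid := resolvent_id hT hR1 hR2
  have hRB : ∀ t : ℝ, R t * B = R 0 * B := by
    intro t
    have h := congrArg (fun X => X * B) (hid t 0)
    rw [add_mul, smul_mul_assoc] at h
    have hassoc : R t * B * R 0 * B = R t * (B * R 0 * B) := by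
      rw [mul_assoc, mul_assoc, mul_assoc]
    rw [hassoc, hzero 0, mul_zero, smul_zero, add_zero] at h
    exact h
  have hQ : R 0 * B * R 0 = 0 := by
    by_contra hQ0
    set Q : H →L[ℂ] H := R 0 * B * R 0 with hQdef
    have hQn : 0 < ‖Q‖ := norm_pos_iff.mpr hQ0
    set t : ℝ := (2 * eps⁻¹ + 1) / ‖Q‖ with htdef
    have ht0 : 0 ≤ t := by positivity
    have h := hid t 0
    have h2 : R t * B * R 0 = Q := by rw [hRB t, hQdef]
    rw [h2] at h
    have h3 : R t - R 0 = (((0 - t : ℝ)) : ℂ) • Q := by rw [h]; abel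
    have h4 : ‖R t - R 0‖ = t * ‖Q‖ := by
      rw [h3, norm_smul, Complex.norm_real, Real.norm_eq_abs]
      rw [show |0 - t| = t by rw [abs_sub_comm, sub_zero]; exact abs_of_nonneg ht0]
    have h5 : ‖R t - R 0‖ ≤ 2 * eps⁻¹ := by
      refine (norm_sub_le _ _).trans ?_
      have := hRn t
      have := hRn 0
      linarith
    have h6 : t * ‖Q‖ = 2 * eps⁻¹ + 1 := by
      rw [htdef, div_mul_cancel₀ _ (ne_of_gt hQn)]
    rw [h4, h6] at h5
    linarith
  have hReq : ∀ t : ℝ, R t = R 0 := by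
    intro t
    have h := hid t 0
    rw [show R t * B * R 0 = R 0 * B * R 0 by rw [hRB t], hQ, smul_zero, add_zero] at h
    exact h
  have hBR0 : B * R 0 = 0 := by
    have h1 : T 1 * R 0 = 1 := by rw [← hReq 1]; exact hR1 1
    have h0 : T 0 * R 0 = 1 := hR1 0
    have h2 : (T 1 - T 0) * R 0 = 0 := by rw [sub_mul, h1, h0, sub_self]
    rw [hT 1 0] at h2
    rw [show ((1 - 0 : ℝ) : ℂ) = 1 by norm_num, one_smul] at h2
    exact h2
  have hfin : B = 0 := by
    have h1 : R 0 * T 0 = 1 := hR2 0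
    calc B = B * (R 0 * T 0) := by rw [h1, mul_one]
      _ = B * R 0 * T 0 := by rw [mul_assoc]
      _ = 0 := by rw [hBR0, zero_mul]
  exact hB0 hfin
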